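/- Let M be a commutative composition algebra over a field L with norm N, and let K be a field with an embedding φ : K → M. Then the map q : K → L, q(x) = N(φ(x)), has one of the following forms: q(x) = ψ(x)² for a field embedding ψ : K → L; or q(x) = ψ₁(x)ψ₂(x) for field embeddings ψ₁, ψ₂ : K → L; or q(x) = ψ(x)·σ(ψ(x)) for an embedding ψ : K → M into a separable quadratic field extension M of L with nontrivial Galois automorphism σ. -/

import Mathlib

structure CA19 (L M : Type*) [Field L] [CommRing M] [Algebra L M] where
  N : M → L
  N_smul : ∀ (c : L) (x : M), N (c • x) = c ^ 2 * N x
  polar_add_left' : ∀ x y z : M, (N (x + y + z) - N (x + y) - N z)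
      = (N (x + z) - N x - N z) + (N (y + z) - N y - N z)
  polar_smul_left' : ∀ (c : L) (x y : M),
      (N (c • x + y) - N (c • x) - N y) = c * (N (x + y) - N x - N y)
  nondeg : ∀ x : M, (∀ y : M, N (x + y) - N x - N y = 0) → x = 0
  N_one : N 1 = 1
  N_mul : ∀ x y : M, N (x * y) = N x * N y

namespace CA19

variable {L M : Type*} [Field L] [CommRing M] [Algebra L M] (A : CA19 L M)

def B (x y : M) : L := A.N (x + y) - A.N x - A.N y

def T (x : M) : L := A.B x 1

lemma N_zero : A.N 0 = 0 := by
  have := A.N_smul 0 0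
  simpa using this

lemma N_add (x y : M) : A.N (x + y) = A.N x + A.B x y + A.N y := by
  simp only [B]; ring

lemma B_symm (x y : M) : A.B x y = A.B y x := by
  simp only [B]; rw [add_comm y x]; ring

lemma B_add_left (x y z : M) : A.B (x + y) z = A.B x z + A.B y z :=
  A.polar_add_left' x y z

lemma B_smul_left (c : L) (x y : M) : A.B (c • x) y = c * A.B x y :=
  A.polar_smul_left' c x y

lemma B_add_right (x y z : M) : A.B x (y + z) = A.B x y + A.B x z := by
  rw [B_symm, B_add_left, B_symm A y, B_symm A z]

lemma B_smul_right (c : L) (x y : M) : A.B x (c • y) = c * A.B x y := by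
  rw [B_symm, B_smul_left, B_symm]

lemma B_zero_left (y : M) : A.B 0 y = 0 := by simp [B, A.N_zero]

lemma B_zero_right (x : M) : A.B x 0 = 0 := by rw [B_symm]; exact A.B_zero_left x

lemma B_neg_left (x y : M) : A.B (-x) y = - A.B x y := by
  have := A.B_smul_left (-1) x y
  simpa using this

lemma B_sub_left (x y z : M) : A.B (x - y) z = A.B x z - A.B y z := by
  rw [sub_eq_add_neg, B_add_left, B_neg_left, sub_eq_add_neg]

lemma B_self (x : M) : A.B x x = 2 * A.N x := by
  have h : x + x = (2:L) • x := by
    rw [two_smul]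
  simp [B, h, A.N_smul]; ring

lemma B_mul_right_cancel (x y z : M) : A.B (x * z) (y * z) = A.B x y * A.N z := by
  simp only [B, ← add_mul, A.N_mul]; ring

lemma B_mul_left_cancel (x y z : M) : A.B (z * x) (z * y) = A.N z * A.B x y := by
  simp only [B, ← mul_add, A.N_mul]; ring

lemma four_var (x y z w : M) :
    A.B (x * z) (y * w) + A.B (x * w) (y * z) = A.B x y * A.B z w := by
  have h1 : A.B (x * (z + w)) (y * (z + w)) = A.B x y * A.N (z + w) :=
    A.B_mul_right_cancel x y (z + w)
  rw [mul_add, mul_add, B_add_left, B_add_right, B_add_right, A.N_add z w,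
    A.B_mul_right_cancel x y z, A.B_mul_right_cancel x y w] at h1
  linear_combination h1

lemma T_one : A.T 1 = 2 := by
  have := A.B_self (1 : M)
  simp [T, this, A.N_one]

lemma T_mul (x y : M) : A.T (x * y) = A.T x * A.T y - A.B x y := by
  have h := A.four_var x 1 y 1
  simp only [one_mul, mul_one] at h
  simp only [T]
  linear_combination h

lemma T_add (x y : M) : A.T (x + y) = A.T x + A.T y := A.B_add_left x y 1

lemma T_smul (c : L) (x : M) : A.T (c • x) = c * A.T x := A.B_smul_left c x 1

lemma T_zero : A.T 0 = 0 := A.B_zero_left 1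

lemma B_one_right (x : M) : A.B x 1 = A.T x := rfl

lemma B_one_left (x : M) : A.B 1 x = A.T x := A.B_symm 1 x

/-- every element satisfies its characteristic quadratic -/
lemma quadratic (x : M) : x * x = A.T x • x - A.N x • (1 : M) := by
  have key : ∀ z : M, A.B (x * x - (A.T x • x - A.N x • 1)) z = 0 := by
    intro z
    have h1 : A.B (x * x) z = A.T x * A.B x z - A.N x * A.T z := by
      have h := A.four_var x 1 x z
      simp only [one_mul, mul_one] at h
      have h2 : A.B (x * z) x = A.T z * A.N x := by
        have := A.B_mul_right_cancel z 1 x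
        rw [one_mul] at this
        rw [mul_comm x z, ← A.B_one_right]
        exact this
      simp only [T] at h h2 ⊢
      linear_combination h - h2
    rw [B_sub_left, sub_eq_add_neg (A.T x • x), B_add_left, B_neg_left,
      B_smul_left, B_smul_left, h1, A.B_one_left]
    ring
  have := A.nondeg _ key
  have h0 : x * x - (A.T x • x - A.N x • 1) = 0 := this
  linear_combination (norm := abel) h0


/-- linearization of the quadratic identity -/
lemma linearized (x y : M) :
    (2:L) • (x * y) = A.T x • y + A.T y • x - A.B x y • (1:M) := by
  have hxy := A.quadratic (x + y)
  have hx := A.quadratic x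
  have hy := A.quadratic y
  rw [A.T_add, A.N_add] at hxy
  have expand : (x + y) * (x + y) = x * x + (x*y + x*y) + y * y := by ring
  rw [expand, hx, hy] at hxy
  have h2 : (2:L) • (x*y) = x*y + x*y := two_smul L (x*y)
  rw [h2]
  have := hxy
  -- rearrange
  have goal : x*y + x*y = A.T x • y + A.T y • x - A.B x y • (1:M) := by
    have h3 : (A.T x + A.T y) • (x + y) = A.T x • x + A.T x • y + A.T y • x + A.T y • y := by
      rw [add_smul, smul_add, smul_add]; abel
    have h4 : (A.N x + A.B x y + A.N y) • (1:M) = A.N x • 1 + A.B x y • 1 + A.N y • 1 := by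
      rw [add_smul, add_smul]
    rw [h3, h4] at this
    have := this
    abel_nf at this ⊢
    linear_combination (norm := abel_nf) this
  exact goal

include A in
lemma one_ne_zero' : (1 : M) ≠ 0 := by
  intro h
  have : A.N 1 = 0 := by rw [h, A.N_zero]
  rw [A.N_one] at this
  exact one_ne_zero this

include A in
/-- no nonzero square-zero elements -/
lemma no_nilpotents (z : M) (hz : z * z = 0) : z = 0 := by
  have hNz : A.N z = 0 := by
    have : A.N z * A.N z = 0 := by rw [← A.N_mul, hz, A.N_zero]
    exact mul_self_eq_zero.mp this
  have hTz : A.T z • z = 0 := by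
    have := A.quadratic z
    rw [hz, hNz, zero_smul, sub_zero] at this
    exact this.symm
  -- key: for any u with u*u = 0 we get T u = 0
  have Tkey : ∀ u : M, u * u = 0 → A.T u = 0 := by
    intro u hu
    have hNu : A.N u = 0 := by
      have : A.N u * A.N u = 0 := by rw [← A.N_mul, hu, A.N_zero]
      exact mul_self_eq_zero.mp this
    have hTu : A.T u • u = 0 := by
      have := A.quadratic u
      rw [hu, hNu, zero_smul, sub_zero] at this
      exact this.symm
    rcases smul_eq_zero.mp hTu with h | h
    · exact h
    · rw [h, T_zero]
  apply A.nondeg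
  intro y
  have hB : A.B z y = A.T z * A.T y - A.T (z * y) := by
    have := A.T_mul z y
    linear_combination this
  have hzy : (z * y) * (z * y) = 0 := by
    have : (z*y)*(z*y) = (z*z)*(y*y) := by ring
    rw [this, hz, zero_mul]
  have h1 : A.T (z*y) = 0 := Tkey _ hzy
  have h2 : A.T z = 0 := Tkey _ hz
  show A.B z y = 0
  rw [hB, h1, h2, zero_mul, sub_zero]


lemma T_sub (x y : M) : A.T (x - y) = A.T x - A.T y := A.B_sub_left x y 1

lemma T_smul_one (t : L) : A.T (t • (1:M)) = t * 2 := by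
  rw [T_smul, T_one]

include A in
lemma dichotomy :
    (∀ x : M, ∃ t : L, x = t • (1:M)) ∨
    (∃ e : M, (∀ t : L, e ≠ t • (1:M)) ∧ (∀ x : M, ∃ a b : L, x = a • (1:M) + b • e) ∧
      (((2:L) ≠ 0 ∧ A.T e = 0 ∧ A.N e ≠ 0) ∨ ((2:L) = 0 ∧ A.T e ≠ 0))) := by
  by_cases h2 : (2:L) = 0
  · right
    have hz : ∃ z : M, A.T z ≠ 0 := by
      by_contra hc
      push_neg at hc
      have h1 : (1:M) = 0 := by
        apply A.nondeg
        intro y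
        have : A.B 1 y = 0 := by rw [A.B_one_left]; exact hc y
        exact this
      exact A.one_ne_zero' h1
    obtain ⟨z, hTz⟩ := hz
    refine ⟨z, ?_, ?_, Or.inr ⟨h2, hTz⟩⟩
    · intro t ht
      apply hTz
      rw [ht, A.T_smul_one, h2, mul_zero]
    · intro x
      have hlin := A.linearized z x
      rw [h2, zero_smul] at hlin
      -- 0 = T z • x + T x • z - B z x • 1
      have h3 : A.T z • x = A.B z x • (1:M) - A.T x • z := by
        rw [eq_comm] at hlin
        rw [sub_eq_iff_eq_add] at hlin
        rw [eq_comm, sub_eq_iff_eq_add]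
        rw [hlin]; abel
      refine ⟨(A.T z)⁻¹ * A.B z x, -((A.T z)⁻¹ * A.T x), ?_⟩
      have h4 : x = (A.T z)⁻¹ • (A.T z • x) := (inv_smul_smul₀ hTz x).symm
      rw [h3, smul_sub, smul_smul, smul_smul] at h4
      rw [neg_smul, ← sub_eq_add_neg]
      exact h4
  · by_cases hdim : ∀ x : M, ∃ t : L, x = t • (1:M)
    · left; exact hdim
    · right
      push_neg at hdim
      obtain ⟨z, hz⟩ := hdim
      set e := z - (A.T z / 2) • (1:M) with hedef
      have hTe : A.T e = 0 := by
        rw [hedef, T_sub, T_smul_one, div_mul_cancel₀ _ h2, sub_self]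
      have he : ∀ t : L, e ≠ t • (1:M) := by
        intro t ht
        apply hz (t + A.T z / 2)
        have hz2 : z = e + (A.T z / 2) • (1:M) := by rw [hedef]; abel
        rw [add_smul]
        conv_lhs => rw [hz2, ht]
      have hNe : A.N e ≠ 0 := by
        intro h0
        have hsq : e * e = 0 := by
          rw [A.quadratic e, hTe, h0, zero_smul, zero_smul, sub_zero]
        exact he 0 (by rw [zero_smul]; exact A.no_nilpotents e hsq)
      have hinv : e * ((-(A.N e)⁻¹) • e) = 1 := by
        rw [mul_smul_comm, A.quadratic e, hTe, zero_smul, zero_sub, smul_neg, neg_smul,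
          neg_neg, smul_smul, inv_mul_cancel₀ hNe, one_smul]
      refine ⟨e, he, ?_, Or.inl ⟨h2, hTe, hNe⟩⟩
      intro x
      set c := A.B e x / (2 * A.N e) with hcdef
      set f := x - (A.T x / 2) • (1:M) - c • e with hfdef
      have hTf : A.T f = 0 := by
        rw [hfdef, T_sub, T_sub, T_smul_one, T_smul, hTe, mul_zero,
          div_mul_cancel₀ _ h2, sub_self, sub_zero]
      have hBef : A.B e f = 0 := by
        rw [hfdef]
        rw [B_symm, B_sub_left, B_sub_left, B_smul_left, B_smul_left, B_symm A x e]
        rw [A.B_one_left, hTe, mul_zero, A.B_self, hcdef]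
        rw [div_mul_eq_mul_div, mul_comm (2:L) (A.N e), mul_div_assoc]
        rw [div_self (by rw [mul_comm]; exact mul_ne_zero h2 hNe : A.N e * (2:L) ≠ 0)]
        ring
      have h2f : (2:L) • (e * f) = 0 := by
        rw [A.linearized e f, hTe, hTf, hBef, zero_smul, zero_smul, zero_smul]
        abel
      have hef : e * f = 0 := by
        rcases smul_eq_zero.mp h2f with h | h
        · exact absurd h h2
        · exact h
      have hf0 : f = 0 := by
        have : f = ((-(A.N e)⁻¹) • e) * (e * f) := by
          rw [← mul_assoc, mul_comm _ e, hinv, one_mul]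
        rw [this, hef, mul_zero]
      refine ⟨A.T x / 2, c, ?_⟩
      have hx2 : x = f + (A.T x / 2) • (1:M) + c • e := by rw [hfdef]; abel
      conv_lhs => rw [hx2, hf0]
      rw [zero_add]


include A in
lemma split_case (e : M) (he : ∀ t : L, e ≠ t • (1:M))
    (hspan : ∀ x : M, ∃ a b : L, x = a • (1:M) + b • e)
    (z : M) (hz1 : ∀ t : L, z ≠ t • (1:M)) (hNz : A.N z = 0) :
    ∃ p₁ p₂ : M →+* L, ∀ x : M, A.N x = p₁ x * p₂ x := by
  have one_ne : (1:M) ≠ 0 := A.one_ne_zero'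
  have hTz : A.T z ≠ 0 := by
    intro h0
    have hsq : z * z = 0 := by
      rw [A.quadratic z, h0, hNz, zero_smul, zero_smul, sub_zero]
    exact hz1 0 (by rw [zero_smul]; exact A.no_nilpotents z hsq)
  obtain ⟨u, hu_def⟩ : ∃ u : M, u = (A.T z)⁻¹ • z := ⟨_, rfl⟩
  have hzu : z = A.T z • u := by rw [hu_def, smul_smul, mul_inv_cancel₀ hTz, one_smul]
  have hu1 : ∀ t : L, u ≠ t • (1:M) := by
    intro t ht
    apply hz1 (A.T z * t)
    rw [← smul_smul]
    conv_lhs => rw [hzu, ht]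
  have huu : u * u = u := by
    have h1 : u * u = ((A.T z)⁻¹ * (A.T z)⁻¹) • (z * z) := by
      rw [hu_def, smul_mul_assoc, mul_smul_comm, smul_smul]
    rw [h1, A.quadratic z, hNz, zero_smul, sub_zero, smul_smul, hu_def]
    congr 1
    field_simp
  obtain ⟨v, hv_def⟩ : ∃ v : M, v = 1 - u := ⟨_, rfl⟩
  have huv : u * v = 0 := by rw [hv_def, mul_sub, mul_one, huu, sub_self]
  have hvv : v * v = v := by
    have h : v * v = 1 - u - u + u * u := by rw [hv_def]; ring
    rw [h, huu, hv_def]; ring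
  have hu0 : u ≠ 0 := fun h => hu1 0 (by rw [zero_smul]; exact h)
  have hv0 : v ≠ 0 := by
    intro h
    apply hu1 1
    rw [one_smul]
    have h2 : u = 1 - v := by rw [hv_def]; abel
    rw [h2, h, sub_zero]
  have huv1 : u + v = 1 := by rw [hv_def]; abel
  obtain ⟨c, d, hcd⟩ := hspan u
  have hd0 : d ≠ 0 := by
    intro h
    exact hu1 c (by rw [hcd, h, zero_smul, add_zero])
  have he_expr : e = d⁻¹ • u - (d⁻¹ * c) • (1:M) := by
    rw [hcd]
    match_scalars
    · field_simp
    · field_simp; ring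
  have uvspan : ∀ x : M, ∃ p : L × L, x = p.1 • u + p.2 • v := by
    intro x
    obtain ⟨a, b, hab⟩ := hspan x
    refine ⟨(a - b * d⁻¹ * c + b * d⁻¹, a - b * d⁻¹ * c), ?_⟩
    rw [hab, he_expr, hv_def]
    match_scalars <;> ring
  have uvzero : ∀ a b : L, a • u + b • v = 0 → a = 0 ∧ b = 0 := by
    intro a b h
    have h1 : u * (a • u + b • v) = a • u := by
      rw [mul_add, mul_smul_comm, mul_smul_comm, huu, huv, smul_zero, add_zero]
    rw [h, mul_zero] at h1
    have ha : a = 0 := by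
      rcases smul_eq_zero.mp h1.symm with h' | h'
      · exact h'
      · exact absurd h' hu0
    refine ⟨ha, ?_⟩
    rw [ha, zero_smul, zero_add] at h
    rcases smul_eq_zero.mp h with h' | h'
    · exact h'
    · exact absurd h' hv0
  have uvuniq : ∀ a b a' b' : L, a • u + b • v = a' • u + b' • v → a = a' ∧ b = b' := by
    intro a b a' b' h
    have h0 : (a - a') • u + (b - b') • v = 0 := by
      rw [sub_smul, sub_smul, sub_add_sub_comm, h, sub_self]
    obtain ⟨h1, h2⟩ := uvzero _ _ h0
    exact ⟨sub_eq_zero.mp h1, sub_eq_zero.mp h2⟩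
  classical
  set P : M → L × L := fun x => Classical.choose (uvspan x) with hP_def
  have hPspec : ∀ x : M, x = (P x).1 • u + (P x).2 • v := fun x =>
    Classical.choose_spec (uvspan x)
  have hPval : ∀ a b : L, P (a • u + b • v) = (a, b) := by
    intro a b
    have h := hPspec (a • u + b • v)
    obtain ⟨h1, h2⟩ := uvuniq _ _ _ _ h.symm
    exact Prod.ext h1 h2
  have hmul : ∀ x y : M, P (x * y) = ((P x).1 * (P y).1, (P x).2 * (P y).2) := by
    intro x y
    have hkey : x * y = ((P x).1 * (P y).1) • u + ((P x).2 * (P y).2) • v := by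
      conv_lhs => rw [hPspec x, hPspec y]
      simp only [add_mul, mul_add, smul_mul_assoc, mul_smul_comm, smul_smul]
      rw [mul_comm v u, huu, hvv, huv]
      simp only [smul_zero, add_zero, zero_add]
      match_scalars <;> ring
    rw [hkey, hPval]
  have hadd : ∀ x y : M, P (x + y) = ((P x).1 + (P y).1, (P x).2 + (P y).2) := by
    intro x y
    have hkey : x + y = ((P x).1 + (P y).1) • u + ((P x).2 + (P y).2) • v := by
      conv_lhs => rw [hPspec x, hPspec y]
      match_scalars <;> ring
    rw [hkey, hPval]
  have hone : P 1 = (1, 1) := by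
    have h1 : (1:M) = (1:L) • u + (1:L) • v := by rw [one_smul, one_smul, huv1]
    rw [h1, hPval]
  have hzero : P 0 = (0, 0) := by
    have h1 : (0:M) = (0:L) • u + (0:L) • v := by rw [zero_smul, zero_smul, add_zero]
    rw [h1, hPval]
  have hNform : ∀ x : M, A.N x = (P x).1 * (P x).2 := by
    intro x
    obtain ⟨⟨a, b⟩, hp⟩ : ∃ p : L × L, P x = p := ⟨P x, rfl⟩
    have hx : x = a • u + b • v := by rw [hPspec x, hp]
    rw [hp]
    show A.N x = a * b
    by_cases hab : a = b
    · have hx1 : x = a • (1:M) := by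
        rw [← huv1, smul_add]
        conv_lhs => rw [hx, ← hab]
      have : A.N x = a ^ 2 := by
        conv_lhs => rw [hx1]
        rw [A.N_smul, A.N_one, mul_one]
      rw [this, hab]; ring
    · have hq1 : x * x = ((a * a) • u + (b * b) • v) := by
        conv_lhs => rw [hx]
        simp only [add_mul, mul_add, smul_mul_assoc, mul_smul_comm, smul_smul]
        rw [mul_comm v u, huu, hvv, huv]
        simp only [smul_zero, add_zero, zero_add]
        match_scalars <;> ring
      have hq2 := A.quadratic x
      obtain ⟨t, ht⟩ : ∃ t : L, A.T x = t := ⟨_, rfl⟩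
      obtain ⟨n, hn⟩ : ∃ n : L, A.N x = n := ⟨_, rfl⟩
      rw [ht, hn] at hq2
      rw [hn]
      have lhs_expr : t • x - n • (1:M)
          = (t * a - n) • u + (t * b - n) • v := by
        rw [← huv1]
        conv_lhs => rw [hx]
        match_scalars <;> ring
      have key : (a * a) • u + (b * b) • v
          = (t * a - n) • u + (t * b - n) • v := by
        rw [← hq1, ← lhs_expr, ← hq2]
      obtain ⟨e1, e2⟩ := uvuniq _ _ _ _ key
      have h3 : (t - (a + b)) * (a - b) = 0 := by linear_combination e2 - e1
      have hT : t = a + b := by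
        rcases mul_eq_zero.mp h3 with h' | h'
        · exact sub_eq_zero.mp h'
        · exact absurd (sub_eq_zero.mp h') hab
      linear_combination e1 + a * hT
  refine ⟨⟨⟨⟨fun x => (P x).1, by show (P 1).1 = 1; rw [hone]⟩,
      fun x y => by show (P (x*y)).1 = (P x).1 * (P y).1; rw [hmul]⟩,
      by show (P 0).1 = 0; rw [hzero],
      fun x y => by show (P (x+y)).1 = (P x).1 + (P y).1; rw [hadd]⟩,
    ⟨⟨⟨fun x => (P x).2, by show (P 1).2 = 1; rw [hone]⟩,
      fun x y => by show (P (x*y)).2 = (P x).2 * (P y).2; rw [hmul]⟩,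
      by show (P 0).2 = 0; rw [hzero],
      fun x y => by show (P (x+y)).2 = (P x).2 + (P y).2; rw [hadd]⟩, hNform⟩


include A in
lemma field_case (e : M) (he : ∀ t : L, e ≠ t • (1:M))
    (hspan : ∀ x : M, ∃ a b : L, x = a • (1:M) + b • e)
    (hnoroot : ∀ r : L, r * r - A.T e * r + A.N e ≠ 0)
    (hchar : ((2:L) ≠ 0 ∧ A.T e = 0 ∧ A.N e ≠ 0) ∨ ((2:L) = 0 ∧ A.T e ≠ 0)) :
    IsField M ∧ Module.finrank L M = 2 ∧ Algebra.IsSeparable L M ∧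
      ∃ σ : M ≃ₐ[L] M, σ ≠ AlgEquiv.refl ∧ ∀ x : M, A.N x • (1:M) = x * σ x := by
  have one_ne : (1:M) ≠ 0 := A.one_ne_zero'
  have indep : ∀ a b : L, a • (1:M) + b • e = 0 → a = 0 ∧ b = 0 := by
    intro a b h
    by_cases hb : b = 0
    · rw [hb, zero_smul, add_zero] at h
      rcases smul_eq_zero.mp h with h' | h'
      · exact ⟨h', hb⟩
      · exact absurd h' one_ne
    · exfalso
      apply he (b⁻¹ * (-a))
      have h1 : b • e = (-a) • (1:M) := by
        rw [neg_smul, eq_neg_iff_add_eq_zero, add_comm]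
        exact h
      have h2 : e = b⁻¹ • (b • e) := (inv_smul_smul₀ hb e).symm
      rw [h1, smul_smul] at h2
      exact h2
  have N_formula : ∀ a b : L, A.N (a • (1:M) + b • e) = a * a + a * b * A.T e + b * b * A.N e := by
    intro a b
    rw [A.N_add, A.N_smul, A.N_smul, A.N_one, B_smul_left, B_smul_right, A.B_one_left]
    ring
  have T_formula : ∀ a b : L, A.T (a • (1:M) + b • e) = a * 2 + b * A.T e := by
    intro a b
    rw [T_add, T_smul, T_smul, T_one]
  have Nx_ne : ∀ x : M, x ≠ 0 → A.N x ≠ 0 := by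
    intro x hx hNx
    obtain ⟨a, b, hab⟩ := hspan x
    rw [hab, N_formula] at hNx
    by_cases hb : b = 0
    · rw [hb] at hNx hab
      simp only [zero_smul, add_zero, mul_zero, zero_mul, add_zero] at hNx hab
      exact hx (by rw [hab, mul_self_eq_zero.mp hNx, zero_smul])
    · apply hnoroot (-(a/b))
      have expand : (-(a/b)) * (-(a/b)) - A.T e * (-(a/b)) + A.N e
          = (a * a + a * b * A.T e + b * b * A.N e) / (b * b) := by
        field_simp
        ring
      rw [expand, hNx, zero_div]
  have hinv : ∀ x : M, x ≠ 0 → ∃ y, x * y = 1 := by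
    intro x hx
    refine ⟨(A.N x)⁻¹ • (A.T x • (1:M) - x), ?_⟩
    rw [mul_smul_comm, mul_sub, mul_smul_comm, mul_one, mul_comm]
    rw [show A.T x • x - x * x = A.N x • (1:M) by rw [A.quadratic x]; abel]
    rw [smul_smul, inv_mul_cancel₀ (Nx_ne x hx), one_smul]
  have hfield : IsField M := ⟨⟨1, 0, one_ne⟩, mul_comm, fun {a} ha => hinv a ha⟩
  -- basis
  have li : LinearIndependent L ![(1:M), e] := by
    rw [LinearIndependent.pair_iff]
    intro s t h
    exact indep s t h
  have hsp : ⊤ ≤ Submodule.span L (Set.range ![(1:M), e]) := by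
    intro x _
    obtain ⟨a, b, hab⟩ := hspan x
    rw [hab]
    apply Submodule.add_mem
    · exact Submodule.smul_mem _ _ (Submodule.subset_span ⟨0, rfl⟩)
    · exact Submodule.smul_mem _ _ (Submodule.subset_span ⟨1, rfl⟩)
  have hfinrank : Module.finrank L M = 2 := by
    rw [Module.finrank_eq_card_basis (Module.Basis.mk li hsp), Fintype.card_fin]
  -- separability
  have hsep : Algebra.IsSeparable L M := by
    constructor
    intro x
    obtain ⟨a, b, hab⟩ := hspan x
    by_cases hb : b = 0
    · have hx : x = (algebraMap L M) a := by
        rw [hab, hb, zero_smul, add_zero, Algebra.algebraMap_eq_smul_one]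
      have hdvd : minpoly L x ∣ (Polynomial.X - Polynomial.C a) := by
        apply minpoly.dvd
        rw [hx]
        simp
      exact (Polynomial.separable_X_sub_C).of_dvd hdvd
    · set p : Polynomial L :=
        Polynomial.X^2 - Polynomial.C (A.T x) * Polynomial.X + Polynomial.C (A.N x) with hp_def
      have haev : Polynomial.aeval x p = 0 := by
        rw [hp_def]
        simp only [map_add, map_sub, map_mul, map_pow, Polynomial.aeval_X, Polynomial.aeval_C]
        rw [← Algebra.smul_def, Algebra.algebraMap_eq_smul_one, sq, A.quadratic x]
        abel
      have hmon : p.Monic := by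
        have h : p = Polynomial.X^(1+1)
            + (Polynomial.C (-(A.T x)) * Polynomial.X + Polynomial.C (A.N x)) := by
          rw [hp_def, map_neg]; ring
        rw [h]
        apply Polynomial.monic_X_pow_add
        exact lt_of_le_of_lt Polynomial.degree_linear_le (by norm_num)
      have hder : Polynomial.derivative p
          = Polynomial.C 2 * Polynomial.X - Polynomial.C (A.T x) := by
        rw [hp_def]
        simp
        rw [one_add_one_eq_two, map_ofNat]
      have hTx : A.T x = a * 2 + b * A.T e := by rw [hab, T_formula]
      have hNx : A.N x = a * a + a * b * A.T e + b * b * A.N e := by rw [hab, N_formula]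
      have hcop : IsCoprime p (Polynomial.derivative p) := by
        rcases hchar with ⟨h2, hTe, hNe⟩ | ⟨h2, hTe⟩
        · -- char ≠ 2 : discriminant nonzero
          set δ : L := A.T x ^ 2 - 4 * A.N x with hδ_def
          have hδ : δ ≠ 0 := by
            have hδval : δ = -(2*2) * (b*b) * A.N e := by
              rw [hδ_def, hTx, hNx, hTe]; ring
            rw [hδval]
            exact mul_ne_zero (mul_ne_zero (neg_ne_zero.mpr (mul_ne_zero h2 h2))
              (mul_ne_zero hb hb)) hNe
          refine ⟨-(Polynomial.C (4 * δ⁻¹)), Polynomial.C δ⁻¹ * Polynomial.derivative p, ?_⟩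
          rw [hder, hp_def]
          have key : -(Polynomial.C (4 * δ⁻¹)) *
                (Polynomial.X^2 - Polynomial.C (A.T x) * Polynomial.X + Polynomial.C (A.N x))
              + Polynomial.C δ⁻¹ * (Polynomial.C 2 * Polynomial.X - Polynomial.C (A.T x))
                * (Polynomial.C 2 * Polynomial.X - Polynomial.C (A.T x))
              = Polynomial.C (δ⁻¹ * δ) := by
            rw [hδ_def]
            simp only [map_mul, map_sub, map_add, map_pow, map_ofNat]
            ring
          rw [key, inv_mul_cancel₀ hδ, map_one]
        · -- char 2 : T x ≠ 0
          have hTx0 : A.T x ≠ 0 := by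
            rw [hTx, h2]
            simpa [h2] using mul_ne_zero hb hTe
          refine ⟨0, -(Polynomial.C (A.T x)⁻¹), ?_⟩
          rw [hder]
          have h2' : (Polynomial.C (2:L)) = 0 := by rw [h2, map_zero]
          have key2 : (0:Polynomial L) * p + (-(Polynomial.C (A.T x)⁻¹))
              * (Polynomial.C 2 * Polynomial.X - Polynomial.C (A.T x))
              = Polynomial.C ((A.T x)⁻¹ * (A.T x)) := by
            rw [h2', map_mul]; ring
          rw [key2, inv_mul_cancel₀ hTx0, map_one]
      have hint : IsIntegral L x := ⟨p, hmon, haev⟩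
      have hdvd : minpoly L x ∣ p := minpoly.dvd L x haev
      exact Polynomial.Separable.of_dvd hcop hdvd
  -- the automorphism
  have conj_mul : ∀ x y : M, A.T (x*y) • (1:M) - x*y
      = (A.T x • (1:M) - x) * (A.T y • (1:M) - y) := by
    intro x y
    have h := A.linearized x y
    have h2 : A.T x • y + A.T y • x = (x*y + x*y) + A.B x y • (1:M) := by
      rw [← two_smul L (x*y), h]; abel
    have expand : (A.T x • (1:M) - x) * (A.T y • (1:M) - y)
        = (A.T x * A.T y) • (1:M) - (A.T x • y + A.T y • x) + x*y := by
      simp only [sub_mul, mul_sub, smul_mul_assoc, mul_smul_comm, smul_smul, one_mul, mul_one]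
      match_scalars <;> ring
    rw [expand, h2, A.T_mul, sub_smul]
    abel
  have conj_invol : ∀ x : M, A.T (A.T x • (1:M) - x) • (1:M) - (A.T x • (1:M) - x) = x := by
    intro x
    rw [T_sub, T_smul, T_one]
    match_scalars <;> ring
  have conj_add : ∀ x y : M, A.T (x + y) • (1:M) - (x + y)
      = (A.T x • (1:M) - x) + (A.T y • (1:M) - y) := by
    intro x y
    rw [T_add]
    match_scalars <;> ring
  have conj_comm : ∀ c : L, A.T ((algebraMap L M) c) • (1:M) - (algebraMap L M) c
      = (algebraMap L M) c := by
    intro c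
    rw [Algebra.algebraMap_eq_smul_one, T_smul, T_one]
    match_scalars <;> ring
  let σ : M ≃ₐ[L] M :=
    { toFun := fun x => A.T x • (1:M) - x
      invFun := fun x => A.T x • (1:M) - x
      left_inv := conj_invol
      right_inv := conj_invol
      map_mul' := fun x y => (conj_mul x y).symm ▸ rfl
      map_add' := conj_add
      commutes' := conj_comm }
  have hσcoe : ∀ x : M, σ x = A.T x • (1:M) - x := fun x => rfl
  refine ⟨hfield, hfinrank, hsep, σ, ?_, ?_⟩
  · intro hcontra
    have heq : σ e = e := by rw [hcontra]; rfl
    rw [hσcoe] at heq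
    have h2e : A.T e • (1:M) = e + e := by
      rw [sub_eq_iff_eq_add] at heq
      rw [heq]
    rcases hchar with ⟨h2, hTe, _⟩ | ⟨h2, hTe⟩
    · rw [hTe, zero_smul] at h2e
      have : (2:L) • e = 0 := by rw [two_smul]; exact h2e.symm
      rcases smul_eq_zero.mp this with h' | h'
      · exact h2 h'
      · exact he 0 (by rw [zero_smul]; exact h')
    · have : e + e = (2:L) • e := (two_smul L e).symm
      rw [this, h2, zero_smul] at h2e
      rcases smul_eq_zero.mp h2e with h' | h'
      · exact hTe h'
      · exact one_ne h'
  · intro x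
    rw [hσcoe, mul_sub, mul_smul_comm, mul_one]
    rw [show x * x = A.T x • x - A.N x • (1:M) from A.quadratic x]
    abel

end CA19

theorem stmt_19 {L M K : Type*} [Field L] [CommRing M] [Algebra L M] [Field K]
    (N : M → L)
    (N_smul : ∀ (c : L) (x : M), N (c • x) = c ^ 2 * N x)
    (polar_add_left : ∀ x y z : M, (N (x + y + z) - N (x + y) - N z)
        = (N (x + z) - N x - N z) + (N (y + z) - N y - N z))
    (polar_smul_left : ∀ (c : L) (x y : M),
        (N (c • x + y) - N (c • x) - N y) = c * (N (x + y) - N x - N y))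
    (nondegenerate : ∀ x : M, (∀ y : M, N (x + y) - N x - N y = 0) → x = 0)
    (N_one : N 1 = 1)
    (N_mul : ∀ x y : M, N (x * y) = N x * N y)
    (φ : K →+* M) :
    (∃ ψ : K →+* L, ∀ x : K, N (φ x) = ψ x ^ 2) ∨
    (∃ ψ₁ ψ₂ : K →+* L, ∀ x : K, N (φ x) = ψ₁ x * ψ₂ x) ∨
    (IsField M ∧ Module.finrank L M = 2 ∧ Algebra.IsSeparable L M ∧
      ∃ σ : M ≃ₐ[L] M, σ ≠ AlgEquiv.refl ∧
        ∃ ψ : K →+* M, ∀ x : K, algebraMap L M (N (φ x)) = ψ x * σ (ψ x)) := by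
  classical
  let A : CA19 L M := ⟨N, N_smul, polar_add_left, polar_smul_left, nondegenerate, N_one, N_mul⟩
  have hAN : ∀ x : M, A.N x = N x := fun _ => rfl
  rcases A.dichotomy with h1 | ⟨e, he, hspan, hchar⟩
  · -- M = L·1
    left
    haveI : Nontrivial M := ⟨1, 0, A.one_ne_zero'⟩
    have hinj : Function.Injective (algebraMap L M) := (algebraMap L M).injective
    have hsurj : Function.Surjective (algebraMap L M) := by
      intro x
      obtain ⟨t, ht⟩ := h1 x
      exact ⟨t, by rw [Algebra.algebraMap_eq_smul_one, ← ht]⟩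
    let eqv : L ≃+* M := RingEquiv.ofBijective (algebraMap L M) ⟨hinj, hsurj⟩
    refine ⟨(eqv.symm : M →+* L).comp φ, fun x => ?_⟩
    have h2 : φ x = algebraMap L M (eqv.symm (φ x)) := (eqv.apply_symm_apply (φ x)).symm
    have h3 : N (φ x) = N ((eqv.symm (φ x)) • (1:M)) := by
      rw [← Algebra.algebraMap_eq_smul_one, ← h2]
    rw [h3, N_smul, N_one, mul_one]
    rfl
  · by_cases hroot : ∃ r : L, r * r - A.T e * r + A.N e = 0
    · -- zero divisors: M ≅ L × L
      right; left
      obtain ⟨r, hr⟩ := hroot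
      have hs : (A.T e - r) * (A.T e - r) - A.T e * (A.T e - r) + A.N e = 0 := by
        linear_combination hr
      have mkz : ∀ t : L, (∀ u : L, e - t • (1:M) ≠ u • (1:M)) := by
        intro t u hu
        apply he (u + t)
        have : e = (e - t • (1:M)) + t • (1:M) := by abel
        rw [this, hu, ← add_smul]
      have hzw : (e - r • (1:M)) * (e - (A.T e - r) • (1:M)) = 0 := by
        have hexp : (e - r • (1:M)) * (e - (A.T e - r) • (1:M))
            = e * e - (r + (A.T e - r)) • e + (r * (A.T e - r)) • (1:M) := by
          simp only [sub_mul, mul_sub, smul_mul_assoc, mul_smul_comm, smul_smul, one_mul, mul_one]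
          match_scalars <;> ring
        rw [hexp, A.quadratic e]
        have hr' : r * r - A.T e * r + N e = 0 := hr
        match_scalars
        · ring
        · linear_combination -hr'
      have hNzw : A.N (e - r • (1:M)) * A.N (e - (A.T e - r) • (1:M)) = 0 := by
        rw [← A.N_mul, hzw, A.N_zero]
      rcases mul_eq_zero.mp hNzw with h | h
      · obtain ⟨p₁, p₂, hp⟩ := A.split_case e he hspan _ (mkz r) h
        exact ⟨p₁.comp φ, p₂.comp φ, fun x => hp (φ x)⟩
      · obtain ⟨p₁, p₂, hp⟩ := A.split_case e he hspan _ (mkz (A.T e - r)) h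
        exact ⟨p₁.comp φ, p₂.comp φ, fun x => hp (φ x)⟩
    · -- quadratic field extension
      right; right
      push_neg at hroot
      obtain ⟨hfield, hrank, hsep, σ, hσ, hprop⟩ := A.field_case e he hspan hroot hchar
      refine ⟨hfield, hrank, hsep, σ, hσ, φ, fun x => ?_⟩
      rw [Algebra.algebraMap_eq_smul_one]
      exact hprop (φ x)
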